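/- For densities f and h and α > 0, the density power divergence d_α(h,f) equals zero if and only if h = f almost everywhere. -/
import Mathlib


open MeasureTheory

/-- Tangent line inequality for `x ^ p`, `p > 1`, strict off the tangency point. -/
lemma dpd_tangent_lt {p a b : ℝ} (hp : 1 < p) (ha : 0 ≤ a) (hb : 0 ≤ b) (hab : a ≠ b) :
    a ^ p + p * a ^ (p - 1) * (b - a) < b ^ p := by
  have hp0 : (0:ℝ) < p := lt_trans one_pos hp
  have hcont : ∀ u v : ℝ, ContinuousOn (fun x : ℝ => x ^ p) (Set.Icc u v) := by
    intro u v x _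
    exact (Real.continuousAt_rpow_const x p (Or.inr hp0.le)).continuousWithinAt
  have hderiv : ∀ x : ℝ, HasDerivAt (fun x : ℝ => x ^ p) (p * x ^ (p - 1)) x := by
    intro x
    simpa [mul_comm] using Real.hasDerivAt_rpow_const (p := p) (x := x) (Or.inr hp.le)
  rcases lt_or_gt_of_ne hab with hlt | hlt
  · obtain ⟨c, hc, hceq⟩ := exists_hasDerivAt_eq_slope (fun x : ℝ => x ^ p)
      (fun x => p * x ^ (p - 1)) hlt (hcont a b) (fun x _ => hderiv x)
    have hca : a ^ (p - 1) < c ^ (p - 1) :=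
      Real.rpow_lt_rpow ha hc.1 (by linarith)
    have hkey : b ^ p - a ^ p = p * c ^ (p - 1) * (b - a) := by
      have hba : b - a ≠ 0 := sub_ne_zero.mpr hlt.ne'
      field_simp at hceq
      linarith [hceq]
    nlinarith [mul_pos (sub_pos.mpr hlt) (mul_pos hp0 (sub_pos.mpr hca))]
  · obtain ⟨c, hc, hceq⟩ := exists_hasDerivAt_eq_slope (fun x : ℝ => x ^ p)
      (fun x => p * x ^ (p - 1)) hlt (hcont b a) (fun x _ => hderiv x)
    have hca : c ^ (p - 1) < a ^ (p - 1) :=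
      Real.rpow_lt_rpow (le_trans hb hc.1.le) hc.2 (by linarith)
    have hkey : a ^ p - b ^ p = p * c ^ (p - 1) * (a - b) := by
      have hba : a - b ≠ 0 := sub_ne_zero.mpr hlt.ne'
      field_simp at hceq
      linarith [hceq]
    nlinarith [mul_pos (sub_pos.mpr hlt) (mul_pos hp0 (sub_pos.mpr hca))]

/-- The pointwise density power divergence integrand is nonnegative, and vanishes
iff the two values coincide. -/
lemma dpd_pointwise {α a b : ℝ} (hα : 0 < α) (ha : 0 ≤ a) (hb : 0 ≤ b) :
    0 ≤ a ^ (1 + α) - (1 + 1/α) * (b * a ^ α) + (1/α) * b ^ (1 + α) ∧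
    (a ^ (1 + α) - (1 + 1/α) * (b * a ^ α) + (1/α) * b ^ (1 + α) = 0 ↔ b = a) := by
  have h1 : a ^ (1 + α) = a * a ^ α := by
    rw [Real.rpow_add' ha (by positivity), Real.rpow_one]
  have h2 : b ^ (1 + α) = b * b ^ α := by
    rw [Real.rpow_add' hb (by positivity), Real.rpow_one]
  by_cases hab : b = a
  · subst hab
    have hzero : b ^ (1 + α) - (1 + 1/α) * (b * b ^ α) + (1/α) * b ^ (1 + α) = 0 := by
      rw [h2]
      field_simp
      ring
    exact ⟨le_of_eq hzero.symm, ⟨fun _ => rfl, fun _ => hzero⟩⟩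
  · have hp : (1:ℝ) < 1 + α := by linarith
    have htan := dpd_tangent_lt hp ha hb (fun hh => hab hh.symm)
    have hsimp : (1 + α) - 1 = α := by ring
    rw [hsimp] at htan
    have hpos : 0 < a ^ (1 + α) - (1 + 1/α) * (b * a ^ α) + (1/α) * b ^ (1 + α) := by
      have hrw : a ^ (1 + α) - (1 + 1/α) * (b * a ^ α) + (1/α) * b ^ (1 + α)
          = (1/α) * (b ^ (1 + α) - (a ^ (1 + α) + (1 + α) * a ^ α * (b - a))) := by
        rw [h1, h2]
        field_simp
        ring
      rw [hrw]
      have : 0 < b ^ (1 + α) - (a ^ (1 + α) + (1 + α) * a ^ α * (b - a)) := by linarith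
      positivity
    exact ⟨hpos.le, by constructor <;> intro hh <;> [linarith; exact absurd hh hab]⟩

/-- The density power divergence `d_α(h, f)` vanishes if and only if `h = f`
almost everywhere (w.r.t. Lebesgue measure), for any `α > 0`. -/
theorem dpd_eq_zero_iff (f h : ℝ → ℝ) (hf : Measurable f) (hh : Measurable h)
    (hf0 : ∀ x, 0 ≤ f x) (hh0 : ∀ x, 0 ≤ h x)
    (hf1 : ∫ x, f x = 1) (hh1 : ∫ x, h x = 1)
    (α : ℝ) (hα : 0 < α)
    (hint1 : Integrable (fun x => f x ^ (1 + α)))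
    (hint2 : Integrable (fun x => h x * f x ^ α))
    (hint3 : Integrable (fun x => h x ^ (1 + α))) :
    (∫ x, (f x ^ (1 + α) - (1 + 1/α) * (h x * f x ^ α) + (1/α) * h x ^ (1 + α))) = 0 ↔
      h =ᵐ[volume] f := by
  set g : ℝ → ℝ :=
    fun x => f x ^ (1 + α) - (1 + 1/α) * (h x * f x ^ α) + (1/α) * h x ^ (1 + α) with hgdef
  have hnonneg : ∀ x, 0 ≤ g x := fun x => (dpd_pointwise hα (hf0 x) (hh0 x)).1
  have hgint : Integrable g :=
    (hint1.sub (hint2.const_mul _)).add (hint3.const_mul _)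
  constructor
  · intro h0
    have hz : g =ᵐ[volume] 0 := (integral_eq_zero_iff_of_nonneg hnonneg hgint).mp h0
    filter_upwards [hz] with x hx
    exact (dpd_pointwise hα (hf0 x) (hh0 x)).2.mp hx
  · intro heq
    have hz : g =ᵐ[volume] 0 := by
      filter_upwards [heq] with x hx
      show g x = 0
      exact (dpd_pointwise hα (hf0 x) (hh0 x)).2.mpr hx
    calc (∫ x, g x) = ∫ _x, (0:ℝ) := integral_congr_ae hz
      _ = 0 := integral_zero _ _
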